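/- Let A be an n×n matrix and B an m×m matrix over a field F. Then R^{rc}(A⊗B, r_a·m + r_b·n) ≤ R^{rc}(A, r_a) · R^{rc}(B, r_b). -/

import Mathlib

open Kronecker

/-- Row-column rigidity: the least `t` such that there is `Z` with
`rank (A - Z) ≤ r` and at most `t` nonzero entries in every row and column of `Z`. -/
noncomputable def rcRigid {F : Type*} [Field F] {α : Type*} [Fintype α] [DecidableEq α]
    (A : Matrix α α F) (r : ℕ) : ℕ :=
  sInf {t | ∃ Z : Matrix α α F, (A - Z).rank ≤ r ∧
    (∀ i, Nat.card {j // Z i j ≠ 0} ≤ t) ∧ (∀ j, Nat.card {i // Z i j ≠ 0} ≤ t)}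

section Helpers
open Matrix

lemma matRank_add_le {F : Type*} [Field F] {α β : Type*} [Fintype α] [Fintype β]
    (M N : Matrix α β F) : (M + N).rank ≤ M.rank + N.rank := by
  classical
  have hle : LinearMap.range (M + N).mulVecLin ≤
      LinearMap.range M.mulVecLin ⊔ LinearMap.range N.mulVecLin := by
    rw [Matrix.mulVecLin_add]
    rintro _ ⟨x, rfl⟩
    exact Submodule.add_mem_sup (LinearMap.mem_range_self _ x) (LinearMap.mem_range_self _ x)
  calc (M + N).rank ≤ Module.finrank F
        ↑(LinearMap.range M.mulVecLin ⊔ LinearMap.range N.mulVecLin) :=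
          Submodule.finrank_mono hle
    _ ≤ M.rank + N.rank := Submodule.finrank_add_le_finrank_add_finrank _ _

lemma matRank_factor {F : Type*} [Field F] {α β : Type*} [Fintype α] [Fintype β]
    [DecidableEq α] [DecidableEq β] (A : Matrix α β F) :
    ∃ C : Matrix α (Fin A.rank) F, ∃ D : Matrix (Fin A.rank) β F, A = C * D := by
  classical
  set V := Submodule.span F (Set.range Aᵀ) with hV
  have hd : A.rank = Module.finrank F V := rank_eq_finrank_span_cols A
  let b : Module.Basis (Fin (Module.finrank F V)) F V := Module.finBasis F V
  let col : β → V := fun j => ⟨Aᵀ j, Submodule.subset_span ⟨j, rfl⟩⟩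
  refine ⟨fun i k => ((b (Fin.cast hd k) : α → F) i),
      fun k j => b.repr (col j) (Fin.cast hd k), ?_⟩
  ext i j
  change A i j = ∑ k : Fin A.rank, (b (Fin.cast hd k) : α → F) i * b.repr (col j) (Fin.cast hd k)
  have hsum : ∑ k : Fin A.rank, (b (Fin.cast hd k) : α → F) i * b.repr (col j) (Fin.cast hd k)
      = ∑ k, (b k : α → F) i * b.repr (col j) k :=
    Fintype.sum_equiv (finCongr hd) _ _ (fun k => rfl)
  rw [hsum]
  have := congrArg (Subtype.val) (b.sum_repr (col j))
  have h2 : (∑ k, b.repr (col j) k • (b k : α → F)) = Aᵀ j := by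
    simpa only [col, AddSubmonoidClass.coe_finset_sum, Submodule.coe_smul] using this
  have := congrFun h2 i
  simp only [Finset.sum_apply, Pi.smul_apply, smul_eq_mul, Matrix.transpose_apply] at this
  rw [← this]
  exact Finset.sum_congr rfl (fun k _ => mul_comm _ _)

lemma kronRank_le_left {F : Type*} [Field F] {n m : ℕ}
    (X : Matrix (Fin n) (Fin n) F) (Y : Matrix (Fin m) (Fin m) F) :
    (X ⊗ₖ Y).rank ≤ X.rank * m := by
  obtain ⟨C, D, hCD⟩ := matRank_factor X
  have h : X ⊗ₖ Y = (C ⊗ₖ (1 : Matrix (Fin m) (Fin m) F)) * (D ⊗ₖ Y) := by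
    rw [← Matrix.mul_kronecker_mul, ← hCD, Matrix.one_mul]
  rw [h]
  calc ((C ⊗ₖ (1 : Matrix (Fin m) (Fin m) F)) * (D ⊗ₖ Y)).rank
      ≤ (C ⊗ₖ (1 : Matrix (Fin m) (Fin m) F)).rank := Matrix.rank_mul_le_left _ _
    _ ≤ Fintype.card (Fin X.rank × Fin m) := Matrix.rank_le_card_width _
    _ = X.rank * m := by simp

lemma kronRank_le_right {F : Type*} [Field F] {n m : ℕ}
    (X : Matrix (Fin n) (Fin n) F) (Y : Matrix (Fin m) (Fin m) F) :
    (X ⊗ₖ Y).rank ≤ n * Y.rank := by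
  obtain ⟨C, D, hCD⟩ := matRank_factor Y
  have h : X ⊗ₖ Y = ((1 : Matrix (Fin n) (Fin n) F) ⊗ₖ C) * (X ⊗ₖ D) := by
    rw [← Matrix.mul_kronecker_mul, ← hCD, Matrix.one_mul]
  rw [h]
  calc (((1 : Matrix (Fin n) (Fin n) F) ⊗ₖ C) * (X ⊗ₖ D)).rank
      ≤ ((1 : Matrix (Fin n) (Fin n) F) ⊗ₖ C).rank := Matrix.rank_mul_le_left _ _
    _ ≤ Fintype.card (Fin n × Fin Y.rank) := Matrix.rank_le_card_width _
    _ = n * Y.rank := by simp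

lemma card_kron_row {F : Type*} [Field F] {n m : ℕ}
    (Za : Matrix (Fin n) (Fin n) F) (Zb : Matrix (Fin m) (Fin m) F) (i : Fin n × Fin m) :
    Nat.card {j : Fin n × Fin m // (Za ⊗ₖ Zb) i j ≠ 0} ≤
      Nat.card {j // Za i.1 j ≠ 0} * Nat.card {j // Zb i.2 j ≠ 0} := by
  rw [← Nat.card_prod]
  apply Nat.card_le_card_of_injective
    (fun x => (⟨x.1.1, fun h => x.2 (by simp [Matrix.kroneckerMap_apply, h])⟩,
               ⟨x.1.2, fun h => x.2 (by simp [Matrix.kroneckerMap_apply, h])⟩))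
  intro x y hxy
  have h1 := congrArg (fun p => (p.1 : Fin n)) hxy
  have h2 := congrArg (fun p => (p.2 : Fin m)) hxy
  exact Subtype.ext (Prod.ext h1 h2)

lemma card_kron_col {F : Type*} [Field F] {n m : ℕ}
    (Za : Matrix (Fin n) (Fin n) F) (Zb : Matrix (Fin m) (Fin m) F) (j : Fin n × Fin m) :
    Nat.card {i : Fin n × Fin m // (Za ⊗ₖ Zb) i j ≠ 0} ≤
      Nat.card {i // Za i j.1 ≠ 0} * Nat.card {i // Zb i j.2 ≠ 0} := by
  rw [← Nat.card_prod]
  apply Nat.card_le_card_of_injective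
    (fun x => (⟨x.1.1, fun h => x.2 (by simp [Matrix.kroneckerMap_apply, h])⟩,
               ⟨x.1.2, fun h => x.2 (by simp [Matrix.kroneckerMap_apply, h])⟩))
  intro x y hxy
  have h1 := congrArg (fun p => (p.1 : Fin n)) hxy
  have h2 := congrArg (fun p => (p.2 : Fin m)) hxy
  exact Subtype.ext (Prod.ext h1 h2)


lemma rcRigid_spec {F : Type*} [Field F] {α : Type*} [Fintype α] [DecidableEq α]
    (A : Matrix α α F) (r : ℕ) :
    ∃ Z : Matrix α α F, (A - Z).rank ≤ r ∧
      (∀ i, Nat.card {j // Z i j ≠ 0} ≤ rcRigid A r) ∧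
      (∀ j, Nat.card {i // Z i j ≠ 0} ≤ rcRigid A r) := by
  have hcard : ∀ (p : α → Prop), Nat.card {x // p x} ≤ Fintype.card α := fun p => by
    rw [← Nat.card_eq_fintype_card]
    exact Nat.card_le_card_of_injective Subtype.val Subtype.val_injective
  have hne : Set.Nonempty {t | ∃ Z : Matrix α α F, (A - Z).rank ≤ r ∧
      (∀ i, Nat.card {j // Z i j ≠ 0} ≤ t) ∧ (∀ j, Nat.card {i // Z i j ≠ 0} ≤ t)} :=
    ⟨Fintype.card α, A, by simp [Matrix.rank_zero], fun i => hcard _, fun j => hcard _⟩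
  exact Nat.sInf_mem hne
end Helpers

/-- `R^{rc}(A⊗B, r_a·m + r_b·n) ≤ R^{rc}(A, r_a) · R^{rc}(B, r_b)`. -/
theorem rcRigid_kronecker {F : Type*} [Field F] (n m : ℕ)
    (A : Matrix (Fin n) (Fin n) F) (B : Matrix (Fin m) (Fin m) F) (ra rb : ℕ) :
    rcRigid (A ⊗ₖ B) (ra * m + rb * n) ≤ rcRigid A ra * rcRigid B rb := by
  obtain ⟨Za, hra, hrowa, hcola⟩ := rcRigid_spec A ra
  obtain ⟨Zb, hrb, hrowb, hcolb⟩ := rcRigid_spec B rb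
  rw [rcRigid]
  refine Nat.sInf_le ⟨Za ⊗ₖ Zb, ?_, ?_, ?_⟩
  · have hdecomp : A ⊗ₖ B - Za ⊗ₖ Zb = (A - Za) ⊗ₖ B + Za ⊗ₖ (B - Zb) := by
      ext ⟨i1, i2⟩ ⟨j1, j2⟩
      simp only [Matrix.sub_apply, Matrix.add_apply, Matrix.kroneckerMap_apply]
      ring
    rw [hdecomp]
    calc ((A - Za) ⊗ₖ B + Za ⊗ₖ (B - Zb)).rank
        ≤ ((A - Za) ⊗ₖ B).rank + (Za ⊗ₖ (B - Zb)).rank := matRank_add_le _ _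
      _ ≤ (A - Za).rank * m + n * (B - Zb).rank :=
          add_le_add (kronRank_le_left _ _) (kronRank_le_right _ _)
      _ ≤ ra * m + n * rb := add_le_add (Nat.mul_le_mul hra le_rfl) (Nat.mul_le_mul le_rfl hrb)
      _ = ra * m + rb * n := by ring
  · intro i
    exact (card_kron_row Za Zb i).trans (Nat.mul_le_mul (hrowa i.1) (hrowb i.2))
  · intro j
    exact (card_kron_col Za Zb j).trans (Nat.mul_le_mul (hcola j.1) (hcolb j.2))
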